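/- The coefficient of S^I in the tree-expanded solution g of the noncommutative Poincaré equation, where I is the Polish code of a Schröder tree T(I), equals the product over internal vertices v of T(I) of 1/(q^{φ(v)-1} - 1), where φ(v) is the number of leaves of the subtree rooted at v. -/
import Mathlib


noncomputable section

/-- Schröder trees: reduced plane trees, i.e. rooted plane trees in which every internal
vertex has at least two children (`node a b l` has children `a`, `b`, followed by `l`). -/
inductive STree where
  | leaf : STree
  | node (a b : STree) (l : List STree) : STree

mutual
  /-- Number of leaves of a Schröder tree. -/
  def leavesT : STree → ℕ
    | .leaf => 1
    | .node a b l => leavesT a + leavesT b + leavesL l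
  def leavesL : List STree → ℕ
    | [] => 0
    | t :: ts => leavesT t + leavesL ts
end

mutual
  /-- The Polish code of a Schröder tree: preorder word writing `arity - 1` at each internal
  vertex and `0` at each leaf (a Schröder pseudocomposition, the exponent word of `S^I`). -/
  def polishT : STree → List ℕ
    | .leaf => [0]
    | .node a b l => (1 + l.length) :: (polishT a ++ polishT b ++ polishL l)
  def polishL : List STree → List ℕ
    | [] => []
    | t :: ts => polishT t ++ polishL ts
end

mutual
  /-- The closed-form coefficient `m_I(q) = ∏_{v internal vertex} 1/(q^{φ(v)-1} - 1)`,
  where `φ(v)` is the number of leaves of the subtree rooted at `v`. -/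
  def mProd : STree → RatFunc ℚ
    | .leaf => 1
    | .node a b l =>
        ((RatFunc.X : RatFunc ℚ) ^ (leavesT (.node a b l) - 1) - 1)⁻¹ *
          (mProd a * mProd b * mProdL l)
  def mProdL : List STree → RatFunc ℚ
    | [] => 1
    | t :: ts => mProd t * mProdL ts
end


lemma leavesT_pos (t : STree) : 0 < leavesT t := by
  cases t with
  | leaf => simp [leavesT]
  | node a b l =>
      have := leavesT_pos a
      simp [leavesT]; omega
termination_by sizeOf t
decreasing_by simp; omega

lemma Xpow_sub_one_ne_zero {n : ℕ} (hn : 0 < n) :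
    ((RatFunc.X : RatFunc ℚ) ^ n - 1) ≠ 0 := by
  have h : ((RatFunc.X : RatFunc ℚ) ^ n - 1) =
      algebraMap (Polynomial ℚ) (RatFunc ℚ) (Polynomial.X ^ n - 1) := by
    simp [RatFunc.algebraMap_X]
  rw [h]
  refine (RatFunc.algebraMap_ne_zero ?_)
  intro hz
  have hz' : (Polynomial.X : Polynomial ℚ) ^ n = 1 := sub_eq_zero.mp hz
  have := congrArg Polynomial.natDegree hz'
  simp [Polynomial.natDegree_X_pow] at this
  omega

mutual
theorem auxT (c : STree → RatFunc ℚ)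
    (hleaf : c .leaf = 1)
    (hnode : ∀ (a b : STree) (l : List STree),
      ((RatFunc.X : RatFunc ℚ) ^ (leavesT (.node a b l) - 1) - 1) * c (.node a b l) =
        c a * c b * (l.map c).prod) :
    ∀ t, c t = mProd t
  | .leaf => by simpa [mProd] using hleaf
  | .node a b l => by
      have h := hnode a b l
      have ha := auxT c hleaf hnode a
      have hb := auxT c hleaf hnode b
      have hl := auxL c hleaf hnode l
      have hd : 0 < leavesT (.node a b l) - 1 := by
        have := leavesT_pos a
        have := leavesT_pos b
        simp [leavesT] at *; omega
      have hne := Xpow_sub_one_ne_zero hd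
      rw [ha, hb, hl] at h
      rw [mProd]
      rw [eq_inv_mul_iff_mul_eq₀ hne]
      exact h
theorem auxL (c : STree → RatFunc ℚ)
    (hleaf : c .leaf = 1)
    (hnode : ∀ (a b : STree) (l : List STree),
      ((RatFunc.X : RatFunc ℚ) ^ (leavesT (.node a b l) - 1) - 1) * c (.node a b l) =
        c a * c b * (l.map c).prod) :
    ∀ l : List STree, (l.map c).prod = mProdL l
  | [] => by simp [mProdL]
  | t :: ts => by
      simp [mProdL, auxT c hleaf hnode t, auxL c hleaf hnode ts]
end

/-- **Tree expansion of the Poincaré solution.** The coefficient `c` of `S^I` in the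
tree-expanded solution `g` of the noncommutative Poincaré equation, where `I` is the Polish
code of the Schröder tree `T(I)`, is determined by `c(leaf) = 1` and
`(q^{d(t)-1} - 1) c_t = c_{t_1} ⋯ c_{t_n}` for `t = ∧(t_1,…,t_n)`; it equals
`m_I(q) = ∏_{v internal vertex of T(I)} 1/(q^{φ(v)-1} - 1)`. -/
theorem coeff_of_tree_expansion_eq_prod
    (c : STree → RatFunc ℚ)
    (hleaf : c .leaf = 1)
    (hnode : ∀ (a b : STree) (l : List STree),
      ((RatFunc.X : RatFunc ℚ) ^ (leavesT (.node a b l) - 1) - 1) * c (.node a b l) =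
        c a * c b * (l.map c).prod) :
    ∀ (t : STree) (I : List ℕ), I = polishT t → c t = mProd t := by
  intro t I _
  exact auxT c hleaf hnode t
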